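/- The determinant of the g × g matrix whose rows are indexed by h = 0,...,g-1 and whose columns are: for j = 2,...,[g/2] the column (q_{h-1;1,j})_h, for j = [g/2]+1,...,g-1 the column (q_{h-2;1,j})_h, the column (q_{h-2;2,[g/2]+1})_h, and the column (q_{h-3;g-2,g-1})_h (with q_{m;i,j} := Σ_{l=0}^{m} a_i^l a_j^{m-l}, and q with negative index = 0), equals, up to sign, V(a_3,...,a_{g-1}) · ∏_{r=1, r ≠ 2, [g/2]+1}^{g-1}(a_r - a_2) · ∏_{s=3}^{[g/2]} a_s · ∏_{j=1}^{g-3} a_j, where V denotes the Vandermonde determinant. -/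

import Mathlib

open Finset
namespace Stmt4Aux
section CR
variable {F : Type*} [CommRing F]


variable {F : Type*} [CommRing F]

noncomputable def qd (b : ℕ → F) (m : ℤ) (i j : ℕ) : F :=
  if m < 0 then 0 else ∑ l ∈ Finset.range (m.toNat + 1), b i ^ l * b j ^ (m.toNat - l)

noncomputable def Md (g : ℕ) (b : ℕ → F) : Matrix (Fin g) (Fin g) F := fun h c =>
  if (c : ℕ) + 2 ≤ g / 2 then qd b ((h : ℕ) : ℤ) 1 ((c : ℕ) + 2)
  else if (c : ℕ) ≤ g - 3 then qd b (((h : ℕ) : ℤ) - 1) 1 ((c : ℕ) + 2)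
  else if (c : ℕ) = g - 2 then qd b (((h : ℕ) : ℤ) - 1) 2 (g / 2 + 1)
  else qd b (((h : ℕ) : ℤ) - 2) (g - 2) (g - 1)

noncomputable def Rd (g : ℕ) (b : ℕ → F) : F :=
  (∏ p ∈ (Finset.Icc 3 (g - 1) ×ˢ Finset.Icc 3 (g - 1)).filter (fun p => p.1 < p.2),
      (b p.2 - b p.1)) *
  (∏ r ∈ ((Finset.Icc 1 (g - 1)).erase 2).erase (g / 2 + 1), (b r - b 2)) *
  (∏ s ∈ Finset.Icc 3 (g / 2), b s) *
  (∏ j ∈ Finset.Icc 1 (g - 3), b j)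

theorem qd_neg (b : ℕ → F) {m : ℤ} (hm : m < 0) (i j : ℕ) : qd b m i j = 0 := by
  simp [qd, hm]

theorem qd_nat (b : ℕ → F) (n : ℕ) (i j : ℕ) :
    qd b (n : ℤ) i j = ∑ l ∈ Finset.range (n + 1), b i ^ l * b j ^ (n - l) := by
  simp [qd]

theorem qd_rec (b : ℕ → F) (n : ℕ) (i j : ℕ) :
    qd b (n : ℤ) i j = b i * qd b ((n : ℤ) - 1) i j + b j ^ n := by
  cases n with
  | zero => simp [qd]
  | succ n =>
    have h1 : ((n : ℤ) + 1) - 1 = (n : ℤ) := by ring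
    rw [qd_nat, Nat.cast_add, Nat.cast_one, h1, qd_nat, Finset.sum_range_succ',
      Finset.mul_sum]
    simp only [pow_zero, Nat.sub_zero, one_mul]
    congr 1
    refine Finset.sum_congr rfl fun l hl => ?_
    have hl' : l < n + 1 := Finset.mem_range.mp hl
    have h2 : 1 + n - (1 + l) = n - l := by omega
    rw [pow_succ]
    ring_nf
    rw [h2]

theorem qd_mul_sub (b : ℕ → F) (n : ℕ) (i j : ℕ) :
    qd b (n : ℤ) i j * (b i - b j) = b i ^ (n + 1) - b j ^ (n + 1) := by
  rw [qd_nat, ← geom_sum₂_mul (b i) (b j) (n + 1)]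
  norm_num


variable {F : Type*} [CommRing F]

theorem dsumr {n : ℕ} (t : ℕ) (ht : t < n) (x : F) (y : Fin n → F) :
    ∑ r : Fin n, y r * (if (r : ℕ) = t then x else 0) = y ⟨t, ht⟩ * x := by
  rw [Finset.sum_eq_single (⟨t, ht⟩ : Fin n)]
  · simp
  · intro r _ hr
    have : (r : ℕ) ≠ t := fun h => hr (Fin.ext h)
    simp [this]
  · simp

theorem dsuml {n : ℕ} (t : ℕ) (ht : t < n) (x : F) (y : Fin n → F) :
    ∑ r : Fin n, (if (r : ℕ) = t then x else 0) * y r = x * y ⟨t, ht⟩ := by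
  rw [Finset.sum_eq_single (⟨t, ht⟩ : Fin n)]
  · simp
  · intro r _ hr
    have : (r : ℕ) ≠ t := fun h => hr (Fin.ext h)
    simp [this]
  · simp

theorem dsum0 {n : ℕ} (t : ℕ) (ht : n ≤ t) (x : F) (y : Fin n → F) :
    ∑ r : Fin n, (if (r : ℕ) = t then x else 0) * y r = 0 := by
  apply Finset.sum_eq_zero
  intro r _
  have : (r : ℕ) ≠ t := by omega
  simp [this]

noncomputable def Lm (g : ℕ) (b : ℕ → F) : Matrix (Fin g) (Fin g) F := fun h h' =>
  (if h' = h then 1 else 0) + (if (h' : ℕ) + 1 = (h : ℕ) then -b 1 else 0)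

theorem Lm_tri (g : ℕ) (b : ℕ → F) : (Lm g b).BlockTriangular OrderDual.toDual := by
  intro h h' hlt
  have h1 : h' ≠ h := by intro e; subst e; exact lt_irrefl _ hlt
  have h2 : (h' : ℕ) + 1 ≠ (h : ℕ) := by
    have : (h : ℕ) < (h' : ℕ) := hlt
    omega
  simp [Lm, h1, h2]

theorem Lm_det (g : ℕ) (b : ℕ → F) : (Lm g b).det = 1 := by
  rw [Matrix.det_of_lowerTriangular _ (Lm_tri g b)]
  apply Finset.prod_eq_one
  intro h _
  simp [Lm]

theorem Lmul0 (g : ℕ) (b : ℕ → F) (M : Matrix (Fin g) (Fin g) F) (h c : Fin g)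
    (h0 : (h : ℕ) = 0) : (Lm g b * M) h c = M h c := by
  rw [Matrix.mul_apply]
  have : ∀ h' : Fin g, Lm g b h h' * M h' c = (if h' = h then 1 else 0) * M h' c := by
    intro h'
    have : (h' : ℕ) + 1 ≠ (h : ℕ) := by omega
    simp [Lm, this]
  rw [Finset.sum_congr rfl fun h' _ => this h']
  simp [ite_mul]

theorem Lmul1 (g : ℕ) (b : ℕ → F) (M : Matrix (Fin g) (Fin g) F) (h c : Fin g)
    (t : ℕ) (ht : t < g) (hh : (h : ℕ) = t + 1) :
    (Lm g b * M) h c = M h c - b 1 * M ⟨t, ht⟩ c := by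
  rw [Matrix.mul_apply]
  have key : ∀ h' : Fin g, Lm g b h h' * M h' c =
      (if h' = h then 1 else 0) * M h' c + (if (h' : ℕ) = t then -b 1 else 0) * M h' c := by
    intro h'
    have : ((h' : ℕ) + 1 = (h : ℕ)) = ((h' : ℕ) = t) := by
      apply propext; constructor <;> omega
    rw [Lm, add_mul]
    simp only [this]
  rw [Finset.sum_congr rfl fun h' _ => key h', Finset.sum_add_distrib,
    dsuml t ht]
  simp [ite_mul]
  ring

noncomputable def N0 (g : ℕ) (b : ℕ → F) : Matrix (Fin g) (Fin g) F := fun h c =>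
  if (c : ℕ) + 2 ≤ g / 2 then b ((c : ℕ) + 2) ^ (h : ℕ)
  else if (c : ℕ) ≤ g - 3 then (if (h : ℕ) = 0 then 0 else b ((c : ℕ) + 2) ^ ((h : ℕ) - 1))
  else if (c : ℕ) = g - 2 then (if (h : ℕ) = 0 then 1 else 0)
  else (if (h : ℕ) = 1 then 1 else 0)

noncomputable def Cm (g : ℕ) (c1 c2 c3 c4 c5 c6 : F) : Matrix (Fin g) (Fin g) F := fun r c =>
  (if (c : ℕ) < g - 2 ∧ (r : ℕ) = (c : ℕ) then 1 else 0)
  + (if (c : ℕ) = g - 2 then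
      (if (r : ℕ) = 0 then c1 else 0) + (if (r : ℕ) = g / 2 - 1 then c2 else 0)
        + (if (r : ℕ) = g - 2 then c3 else 0)
     else 0)
  + (if (c : ℕ) = g - 1 then
      (if (r : ℕ) = g - 4 then c4 else 0) + (if (r : ℕ) = g - 3 then c5 else 0)
        + (if (r : ℕ) = g - 1 then c6 else 0)
     else 0)

theorem NC_lt (g : ℕ) (hg : 6 ≤ g) (b : ℕ → F) (C1 C2 C3 C4 C5 C6 : F) (h c : Fin g)
    (hc : (c : ℕ) < g - 2) :
    (N0 g b * Cm g C1 C2 C3 C4 C5 C6) h c = N0 g b h c := by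
  rw [Matrix.mul_apply]
  have hc2 : (c : ℕ) ≠ g - 2 := by omega
  have hc3 : (c : ℕ) ≠ g - 1 := by omega
  have key : ∀ r : Fin g, N0 g b h r * Cm g C1 C2 C3 C4 C5 C6 r c =
      N0 g b h r * (if (r : ℕ) = (c : ℕ) then 1 else 0) := by
    intro r
    simp [Cm, hc, hc2, hc3]
  rw [Finset.sum_congr rfl fun r _ => key r, dsumr (c : ℕ) c.isLt]
  simp

theorem NC_eq2 (g : ℕ) (hg : 6 ≤ g) (b : ℕ → F) (C1 C2 C3 C4 C5 C6 : F) (h c : Fin g)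
    (hc : (c : ℕ) = g - 2) :
    (N0 g b * Cm g C1 C2 C3 C4 C5 C6) h c =
      b 2 ^ (h : ℕ) * C1
      + (if (h : ℕ) = 0 then 0 else b (g / 2 + 1) ^ ((h : ℕ) - 1)) * C2
      + (if (h : ℕ) = 0 then 1 else 0) * C3 := by
  rw [Matrix.mul_apply]
  have hk3 : 3 ≤ g / 2 := by omega
  have hkg : g / 2 ≤ g - 3 := by omega
  have hc1 : ¬ ((c : ℕ) < g - 2) := by omega
  have hc3 : (c : ℕ) ≠ g - 1 := by omega
  have key : ∀ r : Fin g, N0 g b h r * Cm g C1 C2 C3 C4 C5 C6 r c =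
      N0 g b h r * (if (r : ℕ) = 0 then C1 else 0)
      + N0 g b h r * (if (r : ℕ) = g / 2 - 1 then C2 else 0)
      + N0 g b h r * (if (r : ℕ) = g - 2 then C3 else 0) := by
    intro r
    have nA : g - 2 ≠ g - 1 := by omega
    simp [Cm, hc, hc1, hc3, mul_add, nA]
  rw [Finset.sum_congr rfl fun r _ => key r, Finset.sum_add_distrib, Finset.sum_add_distrib,
    dsumr 0 (by omega), dsumr (g / 2 - 1) (by omega), dsumr (g - 2) (by omega)]
  have e1 : N0 g b h ⟨0, by omega⟩ = b 2 ^ (h : ℕ) := by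
    simp only [N0]
    norm_num
    intro hh
    omega
  have e2 : N0 g b h ⟨g / 2 - 1, by omega⟩ =
      (if (h : ℕ) = 0 then 0 else b (g / 2 + 1) ^ ((h : ℕ) - 1)) := by
    simp only [N0]
    have u1 : ¬ (g / 2 - 1 + 2 ≤ g / 2) := by omega
    have u2 : g / 2 - 1 ≤ g - 3 := by omega
    have u3 : g / 2 - 1 + 2 = g / 2 + 1 := by omega
    simp [u1, u2, u3]
  have e3 : N0 g b h ⟨g - 2, by omega⟩ = (if (h : ℕ) = 0 then 1 else 0) := by
    simp only [N0]
    have u1 : ¬ (g - 2 + 2 ≤ g / 2) := by omega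
    have u2 : ¬ (g - 2 ≤ g - 3) := by omega
    simp [u1, u2]
  rw [e1, e2, e3]

theorem NC_eq1 (g : ℕ) (hg : 6 ≤ g) (b : ℕ → F) (C1 C2 C3 C4 C5 C6 : F) (h c : Fin g)
    (hc : (c : ℕ) = g - 1) :
    (N0 g b * Cm g C1 C2 C3 C4 C5 C6) h c =
      (if (h : ℕ) = 0 then 0 else b (g - 2) ^ ((h : ℕ) - 1)) * C4
      + (if (h : ℕ) = 0 then 0 else b (g - 1) ^ ((h : ℕ) - 1)) * C5
      + (if (h : ℕ) = 1 then 1 else 0) * C6 := by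
  rw [Matrix.mul_apply]
  have hkg : g / 2 ≤ g - 3 := by omega
  have hc1 : ¬ ((c : ℕ) < g - 2) := by omega
  have hc2 : (c : ℕ) ≠ g - 2 := by omega
  have key : ∀ r : Fin g, N0 g b h r * Cm g C1 C2 C3 C4 C5 C6 r c =
      N0 g b h r * (if (r : ℕ) = g - 4 then C4 else 0)
      + N0 g b h r * (if (r : ℕ) = g - 3 then C5 else 0)
      + N0 g b h r * (if (r : ℕ) = g - 1 then C6 else 0) := by
    intro r
    have nD : g - 1 ≠ g - 2 := by omega
    have nE : ¬ (g - 1 < g - 2) := by omega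
    simp [Cm, hc, hc1, hc2, mul_add, nD, nE]
  rw [Finset.sum_congr rfl fun r _ => key r, Finset.sum_add_distrib, Finset.sum_add_distrib,
    dsumr (g - 4) (by omega), dsumr (g - 3) (by omega), dsumr (g - 1) (by omega)]
  have e1 : N0 g b h ⟨g - 4, by omega⟩ =
      (if (h : ℕ) = 0 then 0 else b (g - 2) ^ ((h : ℕ) - 1)) := by
    simp only [N0]
    have u1 : ¬ (g - 4 + 2 ≤ g / 2) := by omega
    have u2 : g - 4 ≤ g - 3 := by omega
    have u3 : g - 4 + 2 = g - 2 := by omega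
    have u1' : ¬ (g ≤ g / 2 + 2) := by omega
    simp [u1, u2, u3, u1']
  have e2 : N0 g b h ⟨g - 3, by omega⟩ =
      (if (h : ℕ) = 0 then 0 else b (g - 1) ^ ((h : ℕ) - 1)) := by
    simp only [N0]
    have u1 : ¬ (g - 3 + 2 ≤ g / 2) := by omega
    have u3 : g - 3 + 2 = g - 1 := by omega
    have u1' : ¬ (g ≤ g / 2 + 1) := by omega
    have u2 : g - 3 ≤ g - 3 := le_refl _
    simp [u1, u3, u1', u2]
  have e3 : N0 g b h ⟨g - 1, by omega⟩ = (if (h : ℕ) = 1 then 1 else 0) := by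
    simp only [N0]
    have u1 : ¬ (g - 1 + 2 ≤ g / 2) := by omega
    have u2 : ¬ (g - 1 ≤ g - 3) := by omega
    have u3 : g - 1 ≠ g - 2 := by omega
    simp [u1, u2, u3]
  rw [e1, e2, e3]

theorem Cm_det (g : ℕ) (hg : 6 ≤ g) (c1 c2 c3 c4 c5 c6 : F) :
    (Cm g c1 c2 c3 c4 c5 c6).det = c3 * c6 := by
  have hk : g / 2 ≤ g - 3 := by omega
  have nA : g - 2 ≠ g - 1 := by omega
  have nB : g - 2 ≠ 0 := by omega
  have nC : g - 2 ≠ g / 2 - 1 := by omega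
  have nD : g - 1 ≠ g - 2 := by omega
  have nE : ¬ (g - 1 < g - 2) := by omega
  have nF : g - 1 ≠ g - 4 := by omega
  have nG : g - 1 ≠ g - 3 := by omega
  have htri : (Cm g c1 c2 c3 c4 c5 c6).BlockTriangular id := by
    intro r c hlt
    have hlt' : (c : ℕ) < (r : ℕ) := hlt
    have h1 : ¬ ((c : ℕ) < g - 2 ∧ (r : ℕ) = (c : ℕ)) := by omega
    rcases eq_or_ne (c : ℕ) (g - 2) with h2 | h2
    · have e0 : (r : ℕ) ≠ 0 := by omega
      have e1 : (r : ℕ) ≠ g / 2 - 1 := by omega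
      have e2 : (r : ℕ) ≠ g - 2 := by omega
      have e3 : (c : ℕ) ≠ g - 1 := by omega
      simp [Cm, h1, h2, e0, e1, e2, e3, nA]
    · rcases eq_or_ne (c : ℕ) (g - 1) with h3 | h3
      · have e0 : (r : ℕ) ≠ g - 4 := by omega
        have e1 : (r : ℕ) ≠ g - 3 := by omega
        have e2 : (r : ℕ) ≠ g - 1 := by
          have := r.isLt; omega
        simp [Cm, h1, h2, h3, e0, e1, e2, nD]
      · simp [Cm, h1, h2, h3]
  rw [Matrix.det_of_upperTriangular htri]
  have hdiag : ∀ c : Fin g, Cm g c1 c2 c3 c4 c5 c6 c c =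
      (if (c : ℕ) = g - 2 then c3 else if (c : ℕ) = g - 1 then c6 else 1) := by
    intro c
    rcases eq_or_ne (c : ℕ) (g - 2) with h2 | h2
    · have e0 : (c : ℕ) ≠ 0 := by omega
      have e1 : (c : ℕ) ≠ g / 2 - 1 := by omega
      have e3 : (c : ℕ) ≠ g - 1 := by omega
      have e4 : ¬ ((c : ℕ) < g - 2 ∧ (c : ℕ) = (c : ℕ)) := by omega
      simp [Cm, h2, e0, e1, e3, e4, nA, nB, nC]
    · rcases eq_or_ne (c : ℕ) (g - 1) with h3 | h3
      · have e0 : (c : ℕ) ≠ g - 4 := by omega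
        have e1 : (c : ℕ) ≠ g - 3 := by omega
        have e4 : ¬ ((c : ℕ) < g - 2 ∧ (c : ℕ) = (c : ℕ)) := by omega
        simp [Cm, h2, h3, e0, e1, e4, nD, nE, nF, nG]
      · have hc : (c : ℕ) < g - 2 := by
          have := c.isLt; omega
        simp [Cm, h2, h3, hc]
  rw [Finset.prod_congr rfl fun c _ => hdiag c]
  rw [Fin.prod_univ_eq_prod_range (fun t => if t = g - 2 then c3 else if t = g - 1 then c6 else 1) g]
  obtain ⟨w, rfl⟩ : ∃ w, g = w + 2 := ⟨g - 2, by omega⟩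
  rw [Finset.prod_range_succ, Finset.prod_range_succ]
  have e1 : w + 2 - 2 = w := by omega
  have e2 : w + 2 - 1 = w + 1 := by omega
  rw [e1, e2]
  have : ∏ t ∈ Finset.range w, (if t = w then c3 else if t = w + 1 then c6 else 1) = 1 := by
    apply Finset.prod_eq_one
    intro t ht
    have h := Finset.mem_range.mp ht
    have e3 : t ≠ w := by omega
    have e4 : t ≠ w + 1 := by omega
    simp [e3, e4]
  rw [this]
  simp

theorem N0_det (n : ℕ) (hg : 6 ≤ n + 2) (b : ℕ → F) :
    (N0 (n + 2) b).det =
      (Matrix.vandermonde (fun c : Fin n => b ((c : ℕ) + 2))).det *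
        ∏ c : Fin n, (if (c : ℕ) + 2 ≤ (n + 2) / 2 then b ((c : ℕ) + 2) ^ 2
          else b ((c : ℕ) + 2)) := by
  have hrow : ∀ i : Fin (n + 1), (((1 : Fin (n + 2)).succAbove i) : ℕ) =
      if (i : ℕ) = 0 then 0 else (i : ℕ) + 1 := by
    intro i
    rw [Fin.succAbove]
    by_cases h0 : (i : ℕ) = 0
    · rw [if_pos, if_pos h0]
      · simp [h0]
      · rw [Fin.lt_def, Fin.coe_castSucc, Fin.val_one]
        omega
    · rw [if_neg, if_neg h0]
      · simp [Fin.val_succ]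
      · rw [Fin.lt_def, Fin.coe_castSucc, Fin.val_one]
        omega
  -- first expansion along the last column
  rw [Matrix.det_succ_column (N0 (n + 2) b) (Fin.last (n + 1))]
  have hcol : ∀ i : Fin (n + 2), N0 (n + 2) b i (Fin.last (n + 1)) =
      (if (i : ℕ) = 1 then 1 else 0) := by
    intro i
    simp only [N0, Fin.val_last]
    have u1 : ¬ (n + 1 + 2 ≤ (n + 2) / 2) := by omega
    have u2 : ¬ (n + 1 ≤ n + 2 - 3) := by omega
    have u3 : n + 1 ≠ n + 2 - 2 := by omega
    rw [if_neg u1, if_neg u2, if_neg u3]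
  rw [Finset.sum_eq_single (1 : Fin (n + 2))]
  · have h11 : ((1 : Fin (n + 2)) : ℕ) = 1 := rfl
    rw [hcol 1, h11]
    rw [if_pos rfl, mul_one]
    -- second expansion
    set A1 := (N0 (n + 2) b).submatrix (1 : Fin (n + 2)).succAbove
      (Fin.last (n + 1)).succAbove with hA1
    rw [Matrix.det_succ_column A1 (Fin.last n)]
    have hcol2 : ∀ i : Fin (n + 1), A1 i (Fin.last n) = (if (i : ℕ) = 0 then 1 else 0) := by
      intro i
      rw [hA1]
      simp only [Matrix.submatrix_apply, Fin.succAbove_last]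
      have hcv : ((Fin.castSucc (Fin.last n)) : ℕ) = n := by simp
      simp only [N0, hcv]
      have u1 : ¬ (n + 2 ≤ (n + 2) / 2) := by omega
      have u2 : ¬ (n ≤ n + 2 - 3) := by omega
      have u3 : n = n + 2 - 2 := by omega
      rw [if_neg u1, if_neg u2, if_pos u3, hrow i]
      by_cases h0 : (i : ℕ) = 0 <;> simp [h0]
    rw [Finset.sum_eq_single (0 : Fin (n + 1))]
    · have h00 : ((0 : Fin (n + 1)) : ℕ) = 0 := rfl
      rw [hcol2 0, h00, if_pos rfl]
      have hW : A1.submatrix (0 : Fin (n + 1)).succAbove (Fin.last n).succAbove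
          = (Matrix.vandermonde (fun c : Fin n => b ((c : ℕ) + 2))).transpose *
            Matrix.diagonal (fun c : Fin n =>
              (if (c : ℕ) + 2 ≤ (n + 2) / 2 then b ((c : ℕ) + 2) ^ 2 else b ((c : ℕ) + 2))) := by
        ext i c
        rw [Matrix.mul_diagonal, Matrix.transpose_apply, Matrix.vandermonde]
        rw [Matrix.submatrix_apply, hA1, Matrix.submatrix_apply]
        rw [Fin.succAbove_last, Fin.zero_succAbove]
        have hcval : ((Fin.castSucc ((Fin.last n).succAbove c)) : ℕ) = (c : ℕ) := by
          rw [Fin.succAbove_last]; simp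
        have hrval : ((Fin.succAbove 1 i.succ) : ℕ) = (i : ℕ) + 2 := by
          rw [hrow i.succ]
          have : (i.succ : ℕ) = (i : ℕ) + 1 := rfl
          rw [this]
          simp
        simp only [N0, hcval, hrval]
        have u2 : (c : ℕ) ≤ n + 2 - 3 := by have := c.isLt; omega
        by_cases u1 : (c : ℕ) + 2 ≤ (n + 2) / 2
        · rw [if_pos u1, if_pos u1, Matrix.of_apply, pow_add]
        · rw [if_neg u1, if_pos u2, if_neg u1, Matrix.of_apply]
          have : (i : ℕ) + 2 ≠ 0 := by omega
          rw [if_neg this]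
          have e : (i : ℕ) + 2 - 1 = (i : ℕ) + 1 := by omega
          rw [e, pow_add, pow_one]
      rw [hW, Matrix.det_mul, Matrix.det_transpose, Matrix.det_diagonal]
      rw [Fin.val_last, Fin.val_last]
      have hsign : ((-1 : F)) ^ (1 + (n + 1)) * (-1) ^ (0 + n) = 1 := by
        rw [← pow_add]
        exact Even.neg_one_pow ⟨n + 1, by ring⟩
      calc (-1 : F) ^ (1 + (n + 1)) *
            ((-1) ^ (0 + n) * 1 *
              ((Matrix.vandermonde fun c : Fin n => b ((c : ℕ) + 2)).det *
                ∏ c : Fin n,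
                  (if (c : ℕ) + 2 ≤ (n + 2) / 2 then b ((c : ℕ) + 2) ^ 2 else b ((c : ℕ) + 2))))
          = ((-1 : F) ^ (1 + (n + 1)) * (-1) ^ (0 + n)) *
            ((Matrix.vandermonde fun c : Fin n => b ((c : ℕ) + 2)).det *
              ∏ c : Fin n,
                (if (c : ℕ) + 2 ≤ (n + 2) / 2 then b ((c : ℕ) + 2) ^ 2 else b ((c : ℕ) + 2))) := by
            ring
        _ = _ := by rw [hsign, one_mul]
    · intro i _ hi
      rw [hcol2 i]
      have : (i : ℕ) ≠ 0 := fun hv => hi (Fin.ext (by rw [hv]; rfl))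
      rw [if_neg this]
      ring
    · intro hmem
      exact absurd (Finset.mem_univ _) hmem
  · intro i _ hi
    rw [hcol i]
    have : (i : ℕ) ≠ 1 := by
      intro hv; exact hi (Fin.ext (by rw [hv]; rfl))
    rw [if_neg this]
    ring
  · intro hmem
    exact absurd (Finset.mem_univ _) hmem



theorem vand_eq (n : ℕ) (hn : 4 ≤ n) (b : ℕ → F) :
    (∏ i : Fin n, ∏ j ∈ Finset.Ioi i, (b ((j : ℕ) + 2) - b ((i : ℕ) + 2))) =
      ∏ i ∈ Finset.Ioc 1 (n + 1), ∏ j ∈ Finset.Ioc i (n + 1), (b j - b i) := by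
  have hin : ∀ i : Fin n, (∏ j ∈ Finset.Ioi i, (b ((j : ℕ) + 2) - b ((i : ℕ) + 2))) =
      ∏ j ∈ Finset.Ioc (i : ℕ) (n - 1), (b (j + 2) - b ((i : ℕ) + 2)) := by
    intro i
    have hIo : Finset.Ioc (i : ℕ) (n - 1) = Finset.Ioo (i : ℕ) n := by
      ext x; simp only [Finset.mem_Ioc, Finset.mem_Ioo]; omega
    rw [hIo, ← Fin.map_valEmbedding_Ioi, Finset.prod_map]
    rfl
  rw [Finset.prod_congr rfl fun i _ => hin i]
  rw [Fin.prod_univ_eq_prod_range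
    (fun i => ∏ j ∈ Finset.Ioc i (n - 1), (b (j + 2) - b (i + 2))) n]
  refine Finset.prod_bij' (fun i _ => i + 2) (fun i _ => i - 2) ?_ ?_ ?_ ?_ ?_
  · intro a ha
    simp only [Finset.mem_range] at ha
    simp only [Finset.mem_Ioc]
    omega
  · intro a ha
    simp only [Finset.mem_Ioc] at ha
    simp only [Finset.mem_range]
    omega
  · intro a ha; show a + 2 - 2 = a; omega
  · intro a ha
    simp only [Finset.mem_Ioc] at ha
    show a - 2 + 2 = a
    omega
  · intro a ha
    refine Finset.prod_bij' (fun j _ => j + 2) (fun j _ => j - 2) ?_ ?_ ?_ ?_ ?_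
    · intro j hj
      simp only [Finset.mem_Ioc] at hj
      simp only [Finset.mem_Ioc]
      omega
    · intro j hj
      simp only [Finset.mem_Ioc] at hj
      simp only [Finset.mem_Ioc]
      simp only [Finset.mem_range] at ha
      omega
    · intro j hj; show j + 2 - 2 = j; omega
    · intro j hj
      simp only [Finset.mem_Ioc] at hj
      show j - 2 + 2 = j
      omega
    · intro j hj; rfl

theorem S_eq (n : ℕ) (b : ℕ → F) :
    (∏ c : Fin n, (if (c : ℕ) + 2 ≤ (n + 2) / 2 then b ((c : ℕ) + 2) ^ 2
        else b ((c : ℕ) + 2))) =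
      ∏ j ∈ Finset.Ioc 1 (n + 1), (if j ≤ (n + 2) / 2 then b j ^ 2 else b j) := by
  rw [Fin.prod_univ_eq_prod_range
    (fun c => if c + 2 ≤ (n + 2) / 2 then b (c + 2) ^ 2 else b (c + 2)) n]
  refine Finset.prod_bij' (fun i _ => i + 2) (fun i _ => i - 2) ?_ ?_ ?_ ?_ ?_
  · intro a ha
    simp only [Finset.mem_range] at ha
    simp only [Finset.mem_Ioc]
    omega
  · intro a ha
    simp only [Finset.mem_Ioc] at ha
    simp only [Finset.mem_range]
    omega
  · intro a ha; show a + 2 - 2 = a; omega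
  · intro a ha
    simp only [Finset.mem_Ioc] at ha
    show a - 2 + 2 = a
    omega
  · intro a ha; rfl


theorem V3_eq (n : ℕ) (b : ℕ → F) :
    (∏ p ∈ (Finset.Icc 3 (n + 1) ×ˢ Finset.Icc 3 (n + 1)).filter (fun p => p.1 < p.2),
        (b p.2 - b p.1)) =
      ∏ i ∈ Finset.Ioc 2 (n + 1), ∏ j ∈ Finset.Ioc i (n + 1), (b j - b i) := by
  rw [Finset.prod_filter, Finset.prod_product]
  have hicc : Finset.Icc 3 (n + 1) = Finset.Ioc 2 (n + 1) := by
    ext x; simp only [Finset.mem_Icc, Finset.mem_Ioc]; omega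
  rw [hicc]
  refine Finset.prod_congr rfl fun i hi => ?_
  rw [← Finset.prod_filter]
  apply Finset.prod_congr
  · ext j
    simp only [Finset.mem_filter, Finset.mem_Ioc] at *
    omega
  · intros; rfl


end CR

section Fld
variable {F : Type*} [Field F]

theorem qd_closed (b : ℕ → F) (n : ℕ) {i j : ℕ} (hij : b i ≠ b j) :
    qd b (n : ℤ) i j = (b i ^ (n + 1) - b j ^ (n + 1)) / (b i - b j) := by
  rw [eq_div_iff (sub_ne_zero.mpr hij)]
  exact qd_mul_sub b n i j

noncomputable def c1v (g : ℕ) (b : ℕ → F) : F :=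
  (b 2 - b 1) / ((b 2 - b (g / 2 + 1)) * b 2)
noncomputable def c2v (g : ℕ) (b : ℕ → F) : F :=
  -((b (g / 2 + 1) - b 1) / (b 2 - b (g / 2 + 1)))
noncomputable def c3v (g : ℕ) (b : ℕ → F) : F := -c1v g b
noncomputable def c4v (g : ℕ) (b : ℕ → F) : F :=
  (b (g - 2) - b 1) / ((b (g - 2) - b (g - 1)) * b (g - 2))
noncomputable def c5v (g : ℕ) (b : ℕ → F) : F :=
  -((b (g - 1) - b 1) / ((b (g - 2) - b (g - 1)) * b (g - 1)))
noncomputable def c6v (g : ℕ) (b : ℕ → F) : F := -(b 1 / (b (g - 2) * b (g - 1)))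

theorem qdm1 (b : ℕ → F) (i j : ℕ) : qd b (-1) i j = 0 := qd_neg b (by norm_num) i j
theorem qdm2 (b : ℕ → F) (i j : ℕ) : qd b (-2) i j = 0 := qd_neg b (by norm_num) i j
theorem qd0 (b : ℕ → F) (i j : ℕ) : qd b ((0 : ℕ) : ℤ) i j = 1 := by simp [qd]
theorem qd0' (b : ℕ → F) (i j : ℕ) : qd b (0 : ℤ) i j = 1 := by simp [qd]

theorem key (g : ℕ) (hg : 6 ≤ g) (b : ℕ → F)
    (h2k : b 2 ≠ b (g / 2 + 1)) (h2 : b 2 ≠ 0) (hgg : b (g - 2) ≠ b (g - 1))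
    (hg2 : b (g - 2) ≠ 0) (hg1 : b (g - 1) ≠ 0) :
    Lm g b * Md g b =
      N0 g b * Cm g (c1v g b) (c2v g b) (c3v g b) (c4v g b) (c5v g b) (c6v g b) := by
  have hd2k : b 2 - b (g / 2 + 1) ≠ 0 := sub_ne_zero.mpr h2k
  have hdgg : b (g - 2) - b (g - 1) ≠ 0 := sub_ne_zero.mpr hgg
  ext h c
  by_cases hc1 : (c : ℕ) + 2 ≤ g / 2
  · -- column type 1
    have hMd : ∀ hh : Fin g, Md g b hh c = qd b ((hh : ℕ) : ℤ) 1 ((c : ℕ) + 2) := by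
      intro hh
      simp only [Md]
      rw [if_pos hc1]
    have hN : N0 g b h c = b ((c : ℕ) + 2) ^ (h : ℕ) := by
      simp only [N0]; rw [if_pos hc1]
    have hlt : (c : ℕ) < g - 2 := by omega
    rw [NC_lt g hg b _ _ _ _ _ _ h c hlt, hN]
    cases hh : (h : ℕ) with
    | zero =>
      rw [Lmul0 g b _ h c hh, hMd, hh]
      simp [qd0']
    | succ t =>
      rw [Lmul1 g b _ h c t (by omega) hh, hMd, hMd]
      simp only [Fin.val_mk]
      rw [hh]
      have e1 : ((t + 1 : ℕ) : ℤ) - 1 = ((t : ℕ) : ℤ) := by push_cast; ring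
      rw [qd_rec b (t + 1), e1]
      ring
  · by_cases hc2 : (c : ℕ) ≤ g - 3
    · -- column type 2
      have hMd : ∀ hh : Fin g, Md g b hh c = qd b (((hh : ℕ) : ℤ) - 1) 1 ((c : ℕ) + 2) := by
        intro hh
        simp only [Md]
        rw [if_neg hc1, if_pos hc2]
      have hN : N0 g b h c =
          (if (h : ℕ) = 0 then 0 else b ((c : ℕ) + 2) ^ ((h : ℕ) - 1)) := by
        simp only [N0]; rw [if_neg hc1, if_pos hc2]
      have hlt : (c : ℕ) < g - 2 := by omega
      rw [NC_lt g hg b _ _ _ _ _ _ h c hlt, hN]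
      cases hh : (h : ℕ) with
      | zero =>
        rw [Lmul0 g b _ h c hh, hMd, hh]
        simp [qdm1]
      | succ t =>
        rw [Lmul1 g b _ h c t (by omega) hh, hMd, hMd]
        simp only [Fin.val_mk]
        rw [hh]
        have e1 : ((t + 1 : ℕ) : ℤ) - 1 = ((t : ℕ) : ℤ) := by push_cast; ring
        rw [e1, qd_rec b t]
        simp only [Fin.val_mk, Nat.succ_ne_zero, if_false, Nat.add_sub_cancel]
        ring
    · have hcc : ¬ ((c : ℕ) ≤ g - 3) := hc2
      by_cases hc3 : (c : ℕ) = g - 2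
      · -- column type 3
        have hMd : ∀ hh : Fin g, Md g b hh c = qd b (((hh : ℕ) : ℤ) - 1) 2 (g / 2 + 1) := by
          intro hh
          simp only [Md]
          rw [if_neg hc1, if_neg hcc, if_pos hc3]
        rw [NC_eq2 g hg b _ _ _ _ _ _ h c hc3]
        cases hh : (h : ℕ) with
        | zero =>
          rw [Lmul0 g b _ h c hh, hMd, hh]
          simp only [Nat.cast_zero, zero_sub, qdm1, if_pos]
          simp [c3v]
        | succ t =>
          rw [Lmul1 g b _ h c t (by omega) hh, hMd, hMd]
          simp only [Fin.val_mk]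
          rw [hh]
          have e1 : ((t + 1 : ℕ) : ℤ) - 1 = ((t : ℕ) : ℤ) := by push_cast; ring
          rw [e1]
          simp only [Fin.val_mk, Nat.succ_ne_zero, if_false, Nat.add_sub_cancel]
          cases t with
          | zero =>
            simp only [Nat.cast_zero, zero_sub, qdm1, qd0, pow_zero, pow_one, mul_zero,
              mul_one, sub_zero, one_mul]
            rw [qd0']
            simp only [c1v, c2v]
            field_simp
            ring
          | succ n =>
            have e4 : ((n + 1 : ℕ) : ℤ) - 1 = ((n : ℕ) : ℤ) := by push_cast; ring
            rw [e4, qd_closed b (n + 1) h2k, qd_closed b n h2k]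
            simp only [c1v, c2v]
            field_simp
            ring
      · -- column type 4
        have hc4 : (c : ℕ) = g - 1 := by have := c.isLt; omega
        have hMd : ∀ hh : Fin g, Md g b hh c = qd b (((hh : ℕ) : ℤ) - 2) (g - 2) (g - 1) := by
          intro hh
          simp only [Md]
          rw [if_neg hc1, if_neg hcc, if_neg hc3]
        rw [NC_eq1 g hg b _ _ _ _ _ _ h c hc4]
        cases hh : (h : ℕ) with
        | zero =>
          rw [Lmul0 g b _ h c hh, hMd, hh]
          simp [qdm2]
        | succ t =>
          rw [Lmul1 g b _ h c t (by omega) hh, hMd, hMd]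
          simp only [Fin.val_mk]
          rw [hh]
          simp only [Fin.val_mk, Nat.succ_ne_zero, if_false, Nat.add_sub_cancel]
          cases t with
          | zero =>
            have e6 : ((0 + 1 : ℕ) : ℤ) - 2 = -1 := by norm_num
            have e7 : ((0 : ℕ) : ℤ) - 2 = -2 := by norm_num
            rw [e6, e7, qdm1, qdm2]
            have e8 : (0 : ℕ) + 1 = 1 := rfl
            simp only [e8, if_pos, pow_zero]
            simp only [c4v, c5v, c6v]
            field_simp
            ring
          | succ n =>
            have e5 : n + 1 + 1 ≠ 1 := by omega
            rw [if_neg e5]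
            have e6 : ((n + 1 + 1 : ℕ) : ℤ) - 2 = ((n : ℕ) : ℤ) := by push_cast; ring
            have e7 : ((n + 1 : ℕ) : ℤ) - 2 = ((n : ℕ) : ℤ) - 1 := by push_cast; ring
            rw [e6, e7]
            cases n with
            | zero =>
              simp only [Nat.cast_zero, zero_sub, qdm1, qd0]
              rw [qd0']
              simp only [c4v, c5v, pow_one, mul_zero, sub_zero]
              field_simp
              ring
            | succ p =>
              have e8 : ((p + 1 : ℕ) : ℤ) - 1 = ((p : ℕ) : ℤ) := by push_cast; ring
              rw [e8, qd_closed b (p + 1) hgg, qd_closed b p hgg]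
              simp only [c4v, c5v]
              field_simp
              ring

theorem Md_det (n : ℕ) (hg : 6 ≤ n + 2) (b : ℕ → F)
    (h2k : b 2 ≠ b ((n + 2) / 2 + 1)) (h2 : b 2 ≠ 0)
    (hgg : b (n + 2 - 2) ≠ b (n + 2 - 1)) (hg2 : b (n + 2 - 2) ≠ 0)
    (hg1 : b (n + 2 - 1) ≠ 0) :
    (Md (n + 2) b).det =
      (Matrix.vandermonde (fun c : Fin n => b ((c : ℕ) + 2))).det *
        (∏ c : Fin n, (if (c : ℕ) + 2 ≤ (n + 2) / 2 then b ((c : ℕ) + 2) ^ 2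
          else b ((c : ℕ) + 2))) *
        (c3v (n + 2) b * c6v (n + 2) b) := by
  have h1 := congrArg Matrix.det (key (n + 2) hg b h2k h2 hgg hg2 hg1)
  rw [Matrix.det_mul, Matrix.det_mul, Lm_det, one_mul, Cm_det (n + 2) hg,
    N0_det n hg b] at h1
  rw [h1]

theorem generic (g : ℕ) (hg : 6 ≤ g) (b : ℕ → F)
    (hne : ∀ i ∈ Finset.Icc 1 (g - 1), ∀ j ∈ Finset.Icc 1 (g - 1), i ≠ j → b i ≠ b j)
    (hnz : ∀ i ∈ Finset.Icc 1 (g - 1), b i ≠ 0) :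
    (Md g b).det = Rd g b := by
  obtain ⟨n, rfl⟩ : ∃ n, g = n + 2 := ⟨g - 2, by omega⟩
  have hn : 4 ≤ n := by omega
  have hg1n : n + 2 - 1 = n + 1 := by omega
  have hk3 : 3 ≤ (n + 2) / 2 := by omega
  have hkn : (n + 2) / 2 ≤ n - 1 := by omega
  have mem : ∀ i, 1 ≤ i → i ≤ n + 1 → i ∈ Finset.Icc 1 (n + 2 - 1) := by
    intro i h1 h2; simp only [Finset.mem_Icc]; omega
  have h2k : b 2 ≠ b ((n + 2) / 2 + 1) :=
    hne 2 (mem 2 (by omega) (by omega)) _ (mem _ (by omega) (by omega)) (by omega)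
  have h2 : b 2 ≠ 0 := hnz 2 (mem 2 (by omega) (by omega))
  have hgg : b (n + 2 - 2) ≠ b (n + 2 - 1) :=
    hne _ (mem _ (by omega) (by omega)) _ (mem _ (by omega) (by omega)) (by omega)
  have hg2 : b (n + 2 - 2) ≠ 0 := hnz _ (mem _ (by omega) (by omega))
  have hg1 : b (n + 2 - 1) ≠ 0 := hnz _ (mem _ (by omega) (by omega))
  rw [Md_det n hg b h2k h2 hgg hg2 hg1, Matrix.det_vandermonde, vand_eq n hn b, S_eq n b]
  have e22 : n + 2 - 2 = n := by omega
  rw [e22] at hgg hg2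
  rw [hg1n] at hgg hg1
  -- splits
  have hIoc12 : Finset.Ioc 1 2 = {2} := by
    ext x; simp only [Finset.mem_Ioc, Finset.mem_singleton]; omega
  have split1 : (∏ i ∈ Finset.Ioc 1 (n + 1), ∏ j ∈ Finset.Ioc i (n + 1), (b j - b i)) =
      (∏ j ∈ Finset.Ioc 2 (n + 1), (b j - b 2)) *
        ∏ i ∈ Finset.Ioc 2 (n + 1), ∏ j ∈ Finset.Ioc i (n + 1), (b j - b i) := by
    rw [← Finset.prod_Ioc_consecutive _ (show (1 : ℕ) ≤ 2 by norm_num)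
      (show 2 ≤ n + 1 by omega), hIoc12, Finset.prod_singleton]
  have splitS : (∏ j ∈ Finset.Ioc 1 (n + 1), (if j ≤ (n + 2) / 2 then b j ^ 2 else b j)) =
      (∏ j ∈ Finset.Ioc 1 ((n + 2) / 2), b j) ^ 2 *
        (∏ j ∈ Finset.Ioc ((n + 2) / 2) (n + 1), b j) := by
    rw [← Finset.prod_Ioc_consecutive _ (show 1 ≤ (n + 2) / 2 by omega)
      (show (n + 2) / 2 ≤ n + 1 by omega)]
    congr 1
    · rw [← Finset.prod_pow]
      refine Finset.prod_congr rfl fun j hj => ?_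
      simp only [Finset.mem_Ioc] at hj
      rw [if_pos hj.2]
    · refine Finset.prod_congr rfl fun j hj => ?_
      simp only [Finset.mem_Ioc] at hj
      rw [if_neg (by omega)]
  have hA : (∏ j ∈ Finset.Ioc 1 ((n + 2) / 2), b j) =
      b 2 * ∏ j ∈ Finset.Ioc 2 ((n + 2) / 2), b j := by
    rw [← Finset.prod_Ioc_consecutive _ (show (1 : ℕ) ≤ 2 by norm_num)
      (show 2 ≤ (n + 2) / 2 by omega), hIoc12, Finset.prod_singleton]
  have hsetB : Finset.Ioc (n - 1) (n + 1) = insert n {n + 1} := by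
    ext x
    simp only [Finset.mem_Ioc, Finset.mem_insert, Finset.mem_singleton]
    omega
  have hB : (∏ j ∈ Finset.Ioc ((n + 2) / 2) (n + 1), b j) =
      (∏ j ∈ Finset.Ioc ((n + 2) / 2) (n - 1), b j) * (b n * b (n + 1)) := by
    rw [← Finset.prod_Ioc_consecutive _ hkn (show n - 1 ≤ n + 1 by omega), hsetB,
      Finset.prod_insert (by simp), Finset.prod_singleton]
  have hset02 : Finset.Ioc 0 2 = insert 1 {2} := by
    ext x
    simp only [Finset.mem_Ioc, Finset.mem_insert, Finset.mem_singleton]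
    omega
  have hD : (∏ j ∈ Finset.Icc 1 (n + 2 - 3), b j) =
      ((b 1 * b 2) * (∏ j ∈ Finset.Ioc 2 ((n + 2) / 2), b j)) *
        (∏ j ∈ Finset.Ioc ((n + 2) / 2) (n - 1), b j) := by
    have h01 : Finset.Icc 1 (n + 2 - 3) = Finset.Ioc 0 (n - 1) := by
      ext x; simp only [Finset.mem_Icc, Finset.mem_Ioc]; omega
    rw [h01, ← Finset.prod_Ioc_consecutive _ (show 0 ≤ (n + 2) / 2 by omega) hkn,
      ← Finset.prod_Ioc_consecutive _ (show (0 : ℕ) ≤ 2 by norm_num)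
        (show 2 ≤ (n + 2) / 2 by omega), hset02,
      Finset.prod_insert (by simp), Finset.prod_singleton]
  have hCc : Finset.Icc 3 ((n + 2) / 2) = Finset.Ioc 2 ((n + 2) / 2) := by
    ext x; simp only [Finset.mem_Icc, Finset.mem_Ioc]; omega
  have hPi : (∏ r ∈ ((Finset.Icc 1 (n + 1)).erase 2).erase ((n + 2) / 2 + 1),
      (b r - b 2)) =
      (b 1 - b 2) * ∏ j ∈ (Finset.Ioc 2 (n + 1)).erase ((n + 2) / 2 + 1), (b j - b 2) := by
    have hset : ((Finset.Icc 1 (n + 1)).erase 2).erase ((n + 2) / 2 + 1) =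
        insert 1 ((Finset.Ioc 2 (n + 1)).erase ((n + 2) / 2 + 1)) := by
      ext x
      simp only [Finset.mem_erase, Finset.mem_insert, Finset.mem_Icc, Finset.mem_Ioc]
      omega
    rw [hset, Finset.prod_insert (by simp only [Finset.mem_erase, Finset.mem_Ioc]; omega)]
  have hP2 : (∏ j ∈ Finset.Ioc 2 (n + 1), (b j - b 2)) =
      (b ((n + 2) / 2 + 1) - b 2) *
        ∏ j ∈ (Finset.Ioc 2 (n + 1)).erase ((n + 2) / 2 + 1), (b j - b 2) := by
    exact (Finset.mul_prod_erase _ _ (by simp only [Finset.mem_Ioc]; omega)).symm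
  -- assemble
  simp only [Rd, hg1n]
  rw [V3_eq n b, hPi, split1, splitS, hA, hB, hD, hCc, hP2]
  have hd2k : b 2 - b ((n + 2) / 2 + 1) ≠ 0 := sub_ne_zero.mpr h2k
  have hc : c3v (n + 2) b * c6v (n + 2) b =
      ((b 2 - b 1) * b 1) /
        ((b 2 - b ((n + 2) / 2 + 1)) * b 2 * (b n * b (n + 1))) := by
    simp only [c3v, c6v, c1v, e22, hg1n]
    field_simp
  rw [hc, ← mul_div_assoc]
  rw [div_eq_iff (by
    exact mul_ne_zero (mul_ne_zero hd2k h2) (mul_ne_zero hg2 hg1))]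
  ring

end Fld

section Map
variable {R S : Type*} [CommRing R] [CommRing S]

theorem qd_map (φ : R →+* S) (b : ℕ → R) (m : ℤ) (i j : ℕ) :
    φ (qd b m i j) = qd (fun t => φ (b t)) m i j := by
  simp only [qd, apply_ite φ, map_zero, map_sum, map_mul, map_pow]

theorem Md_map (φ : R →+* S) (g : ℕ) (b : ℕ → R) :
    Md g (fun t => φ (b t)) = φ.mapMatrix (Md g b) := by
  ext h c
  simp only [RingHom.mapMatrix_apply, Matrix.map_apply, Md, apply_ite φ, qd_map]

theorem Rd_map (φ : R →+* S) (g : ℕ) (b : ℕ → R) :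
    φ (Rd g b) = Rd g (fun t => φ (b t)) := by
  simp only [Rd, map_mul, map_prod, map_sub]

theorem Md_det_map (φ : R →+* S) (g : ℕ) (b : ℕ → R) :
    (Md g (fun t => φ (b t))).det = φ ((Md g b).det) := by
  rw [Md_map, ← RingHom.map_det]

end Map

theorem generic' {K : Type*} [Field K] (g : ℕ) (hg : 6 ≤ g) (a : ℕ → K) :
    (Md g a).det = Rd g a := by
  set R := MvPolynomial ℕ K
  set L := FractionRing R
  have hinj : Function.Injective (algebraMap R L) := IsFractionRing.injective R L
  set bL : ℕ → L := fun i => algebraMap R L (MvPolynomial.X i) with hbL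
  have hne : ∀ i ∈ Finset.Icc 1 (g - 1), ∀ j ∈ Finset.Icc 1 (g - 1), i ≠ j → bL i ≠ bL j := by
    intro i _ j _ hij h
    exact hij (MvPolynomial.X_injective (hinj h))
  have hnz : ∀ i ∈ Finset.Icc 1 (g - 1), bL i ≠ 0 := by
    intro i _ h
    have : (MvPolynomial.X i : R) = 0 := by
      apply hinj
      rw [map_zero]
      exact h
    exact MvPolynomial.X_ne_zero i this
  have hL : (Md g bL).det = Rd g bL := generic g hg bL hne hnz
  have hR : (Md g (fun i => MvPolynomial.X i : ℕ → R)).det =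
      Rd g (fun i => MvPolynomial.X i) := by
    apply hinj
    rw [← Md_det_map (algebraMap R L) g (fun i => MvPolynomial.X i),
      Rd_map (algebraMap R L) g (fun i => MvPolynomial.X i)]
    exact hL
  have := congrArg (MvPolynomial.eval a) hR
  rw [← Md_det_map (MvPolynomial.eval a) g (fun i => MvPolynomial.X i),
    Rd_map (MvPolynomial.eval a) g (fun i => MvPolynomial.X i)] at this
  have hev : (fun t => MvPolynomial.eval a ((fun i => (MvPolynomial.X i : R)) t)) = a := by
    funext t
    simp
  rw [hev] at this
  exact this


end Stmt4Aux

/-- Formula (15): the determinant of the `g × g` matrix whose rows are indexed by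
`h = 0,...,g-1` and whose columns are (writing `k = ⌊g/2⌋` and `q_{m;i,j} = ∑_{l=0}^m a_i^l a_j^{m-l}`
for `m ≥ 0`, `q_{m;i,j} = 0` for `m < 0`): the columns `(q_{h;1,j})_h` for `j = 2,...,k`,
the columns `(q_{h-1;1,j})_h` for `j = k+1,...,g-1`, the column `(q_{h-1;2,k+1})_h` and the
column `(q_{h-2;g-2,g-1})_h`, equals, up to sign,
`V(a_3,...,a_{g-1}) · ∏_{r=1, r≠2, k+1}^{g-1} (a_r - a_2) · ∏_{s=3}^{k} a_s · ∏_{j=1}^{g-3} a_j`,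
where `V` is the Vandermonde determinant. -/
theorem stmt4 {K : Type*} [Field K] (g : ℕ) (hg : 6 ≤ g) (a : ℕ → K)
    (qq : ℤ → ℕ → ℕ → K)
    (hqq : ∀ (m : ℤ) (i j : ℕ), qq m i j =
      if m < 0 then 0 else ∑ l ∈ Finset.range (m.toNat + 1), a i ^ l * a j ^ (m.toNat - l))
    (M : Matrix (Fin g) (Fin g) K)
    (hM : ∀ (h c : Fin g),
      M h c =
        if (c : ℕ) + 2 ≤ g / 2 then qq ((h : ℕ) : ℤ) 1 ((c : ℕ) + 2)
        else if (c : ℕ) ≤ g - 3 then qq (((h : ℕ) : ℤ) - 1) 1 ((c : ℕ) + 2)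
        else if (c : ℕ) = g - 2 then qq (((h : ℕ) : ℤ) - 1) 2 (g / 2 + 1)
        else qq (((h : ℕ) : ℤ) - 2) (g - 2) (g - 1)) :
    ∃ ε : K, (ε = 1 ∨ ε = -1) ∧
      M.det = ε *
        (∏ p ∈ (Finset.Icc 3 (g - 1) ×ˢ Finset.Icc 3 (g - 1)).filter
            (fun p => p.1 < p.2), (a p.2 - a p.1)) *
        (∏ r ∈ ((Finset.Icc 1 (g - 1)).erase 2).erase (g / 2 + 1), (a r - a 2)) *
        (∏ s ∈ Finset.Icc 3 (g / 2), a s) *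
        (∏ j ∈ Finset.Icc 1 (g - 3), a j) := by
  have hMeq : M = Stmt4Aux.Md g a := by
    ext h c
    rw [hM h c]
    simp only [Stmt4Aux.Md, Stmt4Aux.qd, hqq]
  refine ⟨1, Or.inl rfl, ?_⟩
  rw [hMeq, Stmt4Aux.generic' g hg a]
  simp only [Stmt4Aux.Rd]
  ring
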